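/- arXiv:1211.5384 — 3 statements merged into one kernel-verified Lean document; each statement's English description precedes it below -/
import Mathlib

section
/- Let 0 < α < 1 and define the quadrature weights w_{j,k} by: w_{j,0} = ((j-1)^{α+1} - (j-α-1) j^α)/(α(α+1)), w_{j,k} = ((j-k-1)^{α+1} - 2(j-k)^{α+1} + (j-k+1)^{α+1})/(α(α+1)) for 1 ≤ k < j, and w_{j,j} = 1/(α(α+1)). Then for a piecewise-linear function φ on [0, j] with nodes at integers and values φ(k), the exact integral ∫₀ʲ (j - s)^{α-1} φ(s) ds equals Σ_{k=0}^{j} w_{j,k} φ(k). -/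
open Real
open MeasureTheory intervalIntegral

lemma ker_intble {r : ℝ} (hr : -1 < r) (j a b : ℝ) :
    IntervalIntegrable (fun s => (j - s) ^ r) volume a b := by
  have h := (intervalIntegral.intervalIntegrable_rpow' (r := r) hr
    (a := j - a) (b := j - b)).comp_sub_left j
  simpa using h

lemma intPow {r : ℝ} (hr : -1 < r) (j k : ℝ) :
    ∫ s in k..(k+1), (j - s) ^ r = ((j - k) ^ (r+1) - (j - k - 1) ^ (r+1)) / (r+1) := by
  have h := intervalIntegral.integral_comp_sub_left (a := k) (b := k+1)
    (fun u : ℝ => u ^ r) j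
  rw [h, integral_rpow (Or.inl hr)]
  ring_nf

lemma rpow_sub_one_mul {α : ℝ} (hα0 : 0 < α) (hα1 : α < 1) {x : ℝ} (hx : 0 ≤ x) :
    x ^ (α - 1) * x = x ^ α := by
  rcases eq_or_lt_of_le hx with h | h
  · rw [← h, Real.zero_rpow (by linarith), Real.zero_rpow (ne_of_gt hα0)]
    ring
  · rw [← Real.rpow_add_one (ne_of_gt h), sub_add_cancel]

lemma rpow_add_one' {α : ℝ} (hα0 : 0 < α) {x : ℝ} (hx : 0 ≤ x) :
    x ^ (α + 1) = x ^ α * x := by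
  rcases eq_or_lt_of_le hx with h | h
  · rw [← h, Real.zero_rpow (by positivity), Real.zero_rpow (ne_of_gt hα0)]; ring
  · rw [Real.rpow_add_one (ne_of_gt h)]

lemma wid1 {α : ℝ} (hα0 : 0 < α) {t : ℝ} (ht : 1 ≤ t) :
    (t^α - (t-1)^α)/α
      - (t * ((t^α - (t-1)^α)/α) - (t^(α+1) - (t-1)^(α+1))/(α+1))
    = ((t-1)^(α+1) - (t - α - 1)*t^α)/(α*(α+1)) := by
  rw [rpow_add_one' hα0 (by linarith : (0:ℝ) ≤ t),
    rpow_add_one' hα0 (by linarith : (0:ℝ) ≤ t - 1)]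
  field_simp
  ring

lemma wid2 {α : ℝ} (hα0 : 0 < α) :
    (1:ℝ) * (((1:ℝ)^α - (1-1:ℝ)^α)/α) - ((1:ℝ)^(α+1) - (1-1:ℝ)^(α+1))/(α+1)
    = 1/(α*(α+1)) := by
  norm_num [Real.one_rpow, Real.zero_rpow (ne_of_gt hα0),
    Real.zero_rpow (by positivity : α + 1 ≠ 0)]
  field_simp
  ring

lemma wid3 {α : ℝ} (hα0 : 0 < α) {t : ℝ} (ht : 1 ≤ t) :
    ((t^α - (t-1)^α)/α
      - (t * ((t^α - (t-1)^α)/α) - (t^(α+1) - (t-1)^(α+1))/(α+1)))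
      + ((t+1) * (((t+1)^α - (t+1-1)^α)/α) - ((t+1)^(α+1) - (t+1-1)^(α+1))/(α+1))
    = ((t-1)^(α+1) - 2*t^(α+1) + (t+1)^(α+1))/(α*(α+1)) := by
  have h0 : t + 1 - 1 = t := by ring
  rw [h0, rpow_add_one' hα0 (by linarith : (0:ℝ) ≤ t),
    rpow_add_one' hα0 (by linarith : (0:ℝ) ≤ t - 1),
    rpow_add_one' hα0 (by linarith : (0:ℝ) ≤ t + 1)]
  field_simp
  ring

lemma wid3' {α : ℝ} (hα0 : 0 < α) {J u : ℝ} (h : u + 2 ≤ J) :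
    (((J-(u+1))^α - (J-(u+1)-1)^α)/α
      - ((J-(u+1)) * (((J-(u+1))^α - (J-(u+1)-1)^α)/α)
          - ((J-(u+1))^(α+1) - (J-(u+1)-1)^(α+1))/(α+1)))
      + ((J-u) * (((J-u)^α - (J-u-1)^α)/α)
          - ((J-u)^(α+1) - (J-u-1)^(α+1))/(α+1))
    = ((J-(u+1)-1)^(α+1) - 2*(J-(u+1))^(α+1) + (J-(u+1)+1)^(α+1))/(α*(α+1)) := by
  have e2 : J - u - 1 = J - (u+1) + 1 - 1 := by ring
  have e1 : J - u = J - (u+1) + 1 := by ring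
  rw [e2, e1]
  exact wid3 hα0 (by linarith)

lemma interval_val {α : ℝ} (hα0 : 0 < α) (hα1 : α < 1) {j k : ℝ}
    (h : k + 1 ≤ j) (c d : ℝ) :
    ∫ s in k..(k+1), (j - s) ^ (α - 1) * (c + (s - k) * d)
    = c * (((j-k)^α - (j-k-1)^α)/α)
      + d * ((j-k) * (((j-k)^α - (j-k-1)^α)/α)
          - ((j-k)^(α+1) - (j-k-1)^(α+1))/(α+1)) := by
  have he : α - 1 + 1 = α := by ring
  have hker : IntervalIntegrable (fun s => (j - s) ^ (α - 1)) volume k (k+1) :=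
    ker_intble (by linarith) j k (k+1)
  have hker2 : IntervalIntegrable (fun s => (j - s) ^ α) volume k (k+1) :=
    ker_intble (by linarith) j k (k+1)
  have hA : ∫ s in k..(k+1), (j - s) ^ (α - 1)
      = ((j-k)^α - (j-k-1)^α)/α := by
    have := intPow (r := α - 1) (by linarith) j k
    rwa [he] at this
  have hB : ∫ s in k..(k+1), (j - s) ^ (α - 1) * (s - k)
      = (j-k) * (((j-k)^α - (j-k-1)^α)/α)
        - ((j-k)^(α+1) - (j-k-1)^(α+1))/(α+1) := by
    have hcg : ∀ s ∈ Set.uIcc k (k+1),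
        (j - s) ^ (α - 1) * (s - k)
        = (j-k) * (j - s) ^ (α - 1) - (j - s) ^ α := by
      intro s hs
      rw [Set.uIcc_of_le (by linarith : k ≤ k + 1)] at hs
      have hjs : (0:ℝ) ≤ j - s := by
        have := hs.2; linarith
      rw [← rpow_sub_one_mul hα0 hα1 hjs]
      ring
    rw [intervalIntegral.integral_congr hcg,
      intervalIntegral.integral_sub (hker.const_mul _) hker2,
      intervalIntegral.integral_const_mul, hA, intPow (by linarith) j k]
  have hcg2 : ∀ s ∈ Set.uIcc k (k+1),
      (j - s) ^ (α - 1) * (c + (s - k) * d)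
      = (j - s) ^ (α - 1) * c + ((j - s) ^ (α - 1) * (s - k)) * d := by
    intro s _; ring
  have hint2 : IntervalIntegrable (fun s => (j - s) ^ (α - 1) * (s - k)) volume k (k+1) :=
    hker.mul_continuousOn (by fun_prop)
  rw [intervalIntegral.integral_congr hcg2,
    intervalIntegral.integral_add (hker.mul_const c) (hint2.mul_const d),
    intervalIntegral.integral_mul_const, intervalIntegral.integral_mul_const, hA, hB]
  ring

noncomputable def wA (α J : ℝ) (k : ℕ) : ℝ := ((J - k)^α - (J - k - 1)^α)/α

noncomputable def wB (α J : ℝ) (k : ℕ) : ℝ :=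
  (J - k) * (((J - k)^α - (J - k - 1)^α)/α)
    - ((J - k)^(α+1) - (J - k - 1)^(α+1))/(α+1)

theorem abel_quadrature_weights_exact (α : ℝ) (hα0 : 0 < α) (hα1 : α < 1)
    (j : ℕ) (hj : 1 ≤ j) (φ : ℝ → ℝ)
    (hφc : ContinuousOn φ (Set.Icc 0 (j : ℝ)))
    (hφlin : ∀ k : ℕ, k < j → ∀ s ∈ Set.Icc (k : ℝ) ((k : ℝ) + 1),
      φ s = φ (k : ℝ) + (s - (k : ℝ)) * (φ ((k : ℝ) + 1) - φ (k : ℝ))) :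
    ∫ s in (0 : ℝ)..(j : ℝ), ((j : ℝ) - s) ^ (α - 1) * φ s =
      ∑ k ∈ Finset.range (j + 1),
        (if k = 0 then
            (((j : ℝ) - 1) ^ (α + 1) - ((j : ℝ) - α - 1) * (j : ℝ) ^ α) / (α * (α + 1))
          else if k = j then 1 / (α * (α + 1))
          else (((j : ℝ) - k - 1) ^ (α + 1) - 2 * ((j : ℝ) - k) ^ (α + 1)
              + ((j : ℝ) - k + 1) ^ (α + 1)) / (α * (α + 1))) * φ (k : ℝ) := by
  obtain ⟨n, rfl⟩ : ∃ n, j = n + 1 := ⟨j - 1, (Nat.succ_pred_eq_of_pos hj).symm⟩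
  clear hj
  set J : ℝ := ((n+1 : ℕ) : ℝ) with hJdef
  have hJn : J = (n : ℝ) + 1 := by rw [hJdef]; push_cast; ring
  -- integrability on each subinterval
  have hint : ∀ k : ℕ, k < n + 1 →
      IntervalIntegrable (fun s => (J - s) ^ (α-1) * φ s) volume ((k:ℕ):ℝ) ((k+1:ℕ):ℝ) := by
    intro k hk
    have hc : ((k+1:ℕ):ℝ) = (k:ℝ) + 1 := by push_cast; ring
    rw [hc]
    apply (ker_intble (by linarith) J _ _).mul_continuousOn
    apply hφc.mono
    rw [Set.uIcc_of_le (by linarith : (k:ℝ) ≤ (k:ℝ)+1)]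
    apply Set.Icc_subset_Icc (by positivity)
    have hkn : (k:ℝ) ≤ n := by exact_mod_cast Nat.lt_succ_iff.mp hk
    rw [hJn]; linarith
  have hsplit := intervalIntegral.sum_integral_adjacent_intervals (μ := volume)
    (f := fun s => (J - s) ^ (α-1) * φ s) (a := fun i : ℕ => (i:ℝ)) (n := n+1) hint
  beta_reduce at hsplit
  have h0cast : ((0:ℕ):ℝ) = (0:ℝ) := by norm_num
  rw [h0cast] at hsplit
  rw [← hsplit]
  -- evaluate each subinterval integral
  have hval : ∀ k ∈ Finset.range (n+1),
      ∫ s in ((k:ℕ):ℝ)..((k+1:ℕ):ℝ), (J - s) ^ (α-1) * φ s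
      = φ (k:ℝ) * (wA α J k - wB α J k) + φ ((k:ℝ)+1) * wB α J k := by
    intro k hk
    have hk' : k < n + 1 := Finset.mem_range.mp hk
    have hc : ((k+1:ℕ):ℝ) = (k:ℝ) + 1 := by push_cast; ring
    have hkn : (k:ℝ) ≤ n := by exact_mod_cast Nat.lt_succ_iff.mp hk'
    have hkJ : (k:ℝ) + 1 ≤ J := by rw [hJn]; linarith
    rw [hc]
    rw [intervalIntegral.integral_congr
      (g := fun s => (J - s) ^ (α-1) * (φ (k:ℝ) + (s - (k:ℝ)) * (φ ((k:ℝ)+1) - φ (k:ℝ))))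
      (by
        intro s hs
        rw [Set.uIcc_of_le (by linarith : (k:ℝ) ≤ (k:ℝ)+1)] at hs
        beta_reduce
        rw [hφlin k hk' s hs])]
    rw [interval_val hα0 hα1 hkJ]
    unfold wA wB
    ring
  rw [Finset.sum_congr rfl hval]
  -- now pure finite-sum algebra
  rw [Finset.sum_add_distrib,
    Finset.sum_range_succ' (fun k => φ (k:ℝ) * (wA α J k - wB α J k)) n,
    Finset.sum_range_succ (fun k => φ ((k:ℝ)+1) * wB α J k) n]
  conv_rhs => rw [Finset.sum_range_succ' _ (n+1), Finset.sum_range_succ _ n]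
  have e0 : wA α J 0 - wB α J 0
      = ((J - 1)^(α+1) - (J - α - 1)*J^α)/(α*(α+1)) := by
    unfold wA wB
    simp only [Nat.cast_zero, sub_zero]
    exact wid1 hα0 (by rw [hJn]; have : (0:ℝ) ≤ (n:ℝ) := Nat.cast_nonneg n; linarith)
  have en : wB α J n = 1/(α*(α+1)) := by
    unfold wB
    have e : J - (n:ℝ) = 1 := by rw [hJn]; ring
    rw [e]
    exact wid2 hα0
  have hmerge : ∀ k ∈ Finset.range n,
      φ ((k+1:ℕ):ℝ) * (wA α J (k+1) - wB α J (k+1)) + φ ((k:ℝ)+1) * wB α J k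
      = (if k+1 = 0 then
            ((J - 1) ^ (α + 1) - (J - α - 1) * J ^ α) / (α * (α + 1))
          else if k+1 = n+1 then 1 / (α * (α + 1))
          else ((J - ((k+1:ℕ):ℝ) - 1) ^ (α + 1) - 2 * (J - ((k+1:ℕ):ℝ)) ^ (α + 1)
              + (J - ((k+1:ℕ):ℝ) + 1) ^ (α + 1)) / (α * (α + 1))) * φ ((k+1:ℕ):ℝ) := by
    intro k hk
    have hk' : k < n := Finset.mem_range.mp hk
    rw [if_neg (Nat.succ_ne_zero k), if_neg (by omega : k+1 ≠ n+1)]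
    have hc : ((k+1:ℕ):ℝ) = (k:ℝ) + 1 := by push_cast; ring
    have hkn : (k:ℝ) + 1 ≤ (n:ℝ) := by exact_mod_cast Nat.succ_le_of_lt hk'
    have hu : (k:ℝ) + 2 ≤ J := by rw [hJn]; linarith
    unfold wA wB
    rw [hc]
    linear_combination φ ((k:ℝ)+1) * wid3' hα0 hu
  rw [← Finset.sum_congr rfl hmerge, Finset.sum_add_distrib]
  simp only [Nat.succ_ne_zero, if_false, if_neg (Nat.succ_ne_zero n), if_pos rfl,
    eq_self_iff_true, if_true]
  push_cast
  linear_combination φ 0 * e0 + φ ((n:ℝ)+1) * en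
end

section
/- Let n = 2^d and let a ∈ ℝ^{2^d} have a tensor-train (QTT) representation a(k) = A⁽¹⁾_{k₁} A⁽²⁾_{k₂} ⋯ A⁽ᵈ⁾_{k_d}, where k = Σ_{p=1}^d k_p 2^{p-1} with k_p ∈ {0,1} and A⁽ᵖ⁾_{k_p} are matrices of compatible sizes r_{p-1} × r_p with r₀ = r_d = 1. Then the shifted vector b = [x, a(0), a(1), ..., a(2^d - 2)]ᵀ has a QTT representation b(k) = B⁽¹⁾_{k₁} ⋯ B⁽ᵈ⁾_{k_d} with cores: B⁽¹⁾₀ = [0 1], B⁽¹⁾₁ = [A⁽¹⁾₀ 0], B⁽ᵖ⁾₀ = [[A⁽ᵖ⁾₀, 0], [0, 1]], B⁽ᵖ⁾₁ = [[A⁽ᵖ⁾₁, 0], [b_p, 0]] for 2 ≤ p ≤ d-1, B⁽ᵈ⁾₀ = [[A⁽ᵈ⁾₀], [x]], B⁽ᵈ⁾₁ = [[A⁽ᵈ⁾₁], [b_d]], where b_q = A⁽¹⁾₁ A⁽²⁾₁ ⋯ A⁽q-1⁾₁ A⁽q⁾₀. In particular, the QTT ranks of b exceed those of a by at most 1. 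-/
/-- Product `M₀ M₁ ⋯ M_{d-1}` of a chain of matrices of compatible sizes
(tensor-train core product). -/
noncomputable def ttProd (ι : ℕ → Type) [∀ p, Fintype (ι p)] [∀ p, DecidableEq (ι p)] :
    (d : ℕ) → ((p : ℕ) → p < d → Matrix (ι p) (ι (p + 1)) ℝ) → Matrix (ι 0) (ι d) ℝ
  | 0, _ => 1
  | d + 1, A => ttProd ι d (fun p hp => A p (Nat.lt_succ_of_lt hp)) * A d (Nat.lt_succ_self d)

/-- The `p`-th binary digit (little-endian) of `k`. -/
def qttBit (p k : ℕ) : Fin 2 := ⟨k / 2 ^ p % 2, Nat.mod_lt _ (by norm_num)⟩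

lemma ttProd_congr (ι : ℕ → Type) [∀ p, Fintype (ι p)] [∀ p, DecidableEq (ι p)]
    (d : ℕ) (A B : (p : ℕ) → p < d → Matrix (ι p) (ι (p + 1)) ℝ)
    (h : ∀ p hp, A p hp = B p hp) : ttProd ι d A = ttProd ι d B := by
  induction d with
  | zero => rfl
  | succ d ih =>
    show ttProd ι d _ * _ = ttProd ι d _ * _
    rw [ih _ _ (fun p hp => h p _), h]

lemma ttProd_succ (ι : ℕ → Type) [∀ p, Fintype (ι p)] [∀ p, DecidableEq (ι p)]
    (d : ℕ) (A : (p : ℕ) → p < d + 1 → Matrix (ι p) (ι (p + 1)) ℝ) :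
    ttProd ι (d + 1) A =
      ttProd ι d (fun p hp => A p (Nat.lt_succ_of_lt hp)) * A d (Nat.lt_succ_self d) := rfl

lemma qttBit_eq_zero_iff (p k : ℕ) : qttBit p k = 0 ↔ k / 2 ^ p % 2 = 0 := by
  simp [qttBit, Fin.ext_iff]

lemma pred_div_eq (p k : ℕ) (h : k % 2 ^ p ≠ 0) : (k - 1) / 2 ^ p = k / 2 ^ p := by
  have hp0 : 0 < 2 ^ p := by positivity
  have hd := Nat.div_add_mod k (2 ^ p)
  have hlt : k % 2 ^ p < 2 ^ p := Nat.mod_lt _ hp0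
  have h1 : k - 1 = 2 ^ p * (k / 2 ^ p) + (k % 2 ^ p - 1) := by omega
  have h6 : (k % 2 ^ p - 1) / 2 ^ p = 0 := Nat.div_eq_of_lt (by omega)
  rw [h1, Nat.mul_add_div hp0, h6, Nat.add_zero]

lemma qttBit_pred (p k : ℕ) (h : k % 2 ^ p ≠ 0) : qttBit p (k - 1) = qttBit p k := by
  simp [qttBit, Fin.ext_iff, pred_div_eq p k h]

lemma mod_pow_succ_eq_zero_iff (p k : ℕ) :
    k % 2 ^ (p + 1) = 0 ↔ k % 2 ^ p = 0 ∧ k / 2 ^ p % 2 = 0 := by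
  have hp0 : 0 < 2 ^ p := by positivity
  rw [pow_succ, Nat.mod_mul]
  have hlt : k % 2 ^ p < 2 ^ p := Nat.mod_lt _ hp0
  have h2 : k / 2 ^ p % 2 < 2 := Nat.mod_lt _ (by norm_num)
  constructor
  · intro h
    constructor
    · omega
    · have := Nat.eq_zero_of_add_eq_zero_left h
      rcases Nat.mul_eq_zero.mp this with h' | h' <;> omega
  · rintro ⟨h1, h2'⟩; simp [h1, h2']

lemma qttBit_ones (p m : ℕ) : qttBit p (2 ^ m - 1) = if p < m then 1 else 0 := by
  simp only [qttBit, Fin.ext_iff]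
  have hp0 : 0 < 2 ^ p := by positivity
  split
  · next h =>
    have hmp0 : 0 < 2 ^ (m - p) := by positivity
    have h1 : 2 ^ m - 1 = 2 ^ p * (2 ^ (m - p) - 1) + (2 ^ p - 1) := by
      have hm : 2 ^ m = 2 ^ p * 2 ^ (m - p) := by rw [← pow_add]; congr 1; omega
      obtain ⟨s, hs⟩ : ∃ s, 2 ^ (m - p) = s + 1 := ⟨2 ^ (m - p) - 1, by omega⟩
      rw [hm, hs, Nat.mul_add, Nat.add_sub_cancel, mul_one]
      omega
    have h6 : (2 ^ p - 1) / 2 ^ p = 0 := Nat.div_eq_of_lt (by omega)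
    rw [h1, Nat.mul_add_div hp0, h6, Nat.add_zero]
    have h4 : 2 ^ (m - p) = 2 * 2 ^ (m - p - 1) := by rw [← pow_succ']; congr 1; omega
    have h5 : 0 < 2 ^ (m - p - 1) := by positivity
    omega
  · next h =>
    have hle : 2 ^ m ≤ 2 ^ p := Nat.pow_le_pow_right (by norm_num) (by omega)
    have hm0 : 0 < 2 ^ m := by positivity
    have h6 : (2 ^ m - 1) / 2 ^ p = 0 := Nat.div_eq_of_lt (by omega)
    rw [h6]; rfl

lemma qttBit_add_high (p a t s : ℕ) (hp : p < a) :
    qttBit p (2 ^ a * t + s) = qttBit p s := by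
  simp only [qttBit, Fin.ext_iff]
  have hp0 : 0 < 2 ^ p := by positivity
  have h1 : 2 ^ a * t = 2 ^ p * (2 ^ (a - p) * t) := by
    rw [← mul_assoc, ← pow_add]; congr 2; omega
  rw [h1, Nat.mul_add_div hp0]
  have h2 : 2 ^ (a - p) = 2 * 2 ^ (a - p - 1) := by rw [← pow_succ']; congr 1; omega
  rw [h2, mul_assoc, Nat.mul_add_mod]

/-- bits of `k - 1` when `k = 2^(q+2) t + 2^(q+1)`. -/
lemma qttBit_pred_of_pow (q k : ℕ) (h0 : k % 2 ^ (q + 1) = 0) (h1 : k / 2 ^ (q + 1) % 2 = 1) :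
    ∀ p ≤ q + 1, qttBit p (k - 1) = if p = q + 1 then 0 else 1 := by
  intro p hp
  have ha0 : 0 < 2 ^ (q + 1) := by positivity
  have hdd : k / 2 ^ (q + 2) = k / 2 ^ (q + 1) / 2 := by
    rw [pow_succ, Nat.div_div_eq_div_mul]
  have hQ := Nat.div_add_mod k (2 ^ (q + 1))
  have hQ2 := Nat.div_add_mod (k / 2 ^ (q + 1)) 2
  have key : k - 1 = 2 ^ (q + 2) * (k / 2 ^ (q + 2)) + (2 ^ (q + 1) - 1) := by
    have hQ3 : k / 2 ^ (q + 1) = 2 * (k / 2 ^ (q + 2)) + 1 := by omega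
    have e2 : k = 2 ^ (q + 1) * (2 * (k / 2 ^ (q + 2)) + 1) := by rw [← hQ3]; omega
    have e3 : 2 ^ (q + 1) * (2 * (k / 2 ^ (q + 2)) + 1)
        = 2 ^ (q + 2) * (k / 2 ^ (q + 2)) + 2 ^ (q + 1) := by rw [pow_succ]; ring
    omega
  rw [key, qttBit_add_high p (q + 2) _ _ (by omega), qttBit_ones]
  split <;> split <;> first | rfl | omega

lemma qtt_partial
    (ι : ℕ → Type) [∀ p, Fintype (ι p)] [∀ p, DecidableEq (ι p)] [Unique (ι 0)]
    (A : (p : ℕ) → Fin 2 → Matrix (ι p) (ι (p + 1)) ℝ) (k : ℕ) :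
    ∀ q : ℕ,
      ((Matrix.of fun (i : ι 0) (jc : ι 1 ⊕ Unit) =>
          if qttBit 0 k = 0 then
            Sum.elim (fun _ => (0 : ℝ)) (fun _ => 1) jc
          else Sum.elim (fun j => A 0 0 i j) (fun _ => 0) jc)
        * ttProd (fun p => ι (p + 1) ⊕ Unit) q (fun q' _ =>
            if qttBit (q' + 1) k = 0 then
              Matrix.fromBlocks (A (q' + 1) 0) 0 0 1
            else
              Matrix.fromBlocks (A (q' + 1) 1) 0
                (Matrix.of fun (_ : Unit) j =>
                  ttProd ι (q' + 2)
                    (fun p' _ => A p' (if p' = q' + 1 then 0 else 1)) default j) 0))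
      = if k % 2 ^ (q + 1) = 0 then
          Matrix.fromCols 0 (Matrix.of fun _ _ => 1)
        else
          Matrix.fromCols
            (ttProd ι (q + 1) (fun p _ => A p (qttBit p (k - 1)))) 0 := by
  intro q
  induction q with
  | zero =>
    simp only [ttProd]
    rw [Matrix.mul_one]
    have hb := qttBit_eq_zero_iff 0 k
    simp only [pow_zero, Nat.div_one] at hb
    by_cases h : qttBit 0 k = 0
    · have hm : k % 2 ^ (0 + 1) = 0 := by have := hb.mp h; omega
      rw [if_pos hm]
      ext i jc
      rcases jc with j | u <;> simp [h, Matrix.fromCols]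
    · have hm : ¬ k % 2 ^ (0 + 1) = 0 := by
        intro hc; exact h (hb.mpr (by omega))
      rw [if_neg hm]
      have hb0 : qttBit 0 (k - 1) = 0 := by
        rw [qttBit_eq_zero_iff]
        simp only [pow_zero, Nat.div_one]
        have := hb
        omega
      have ht : ttProd ι (0 + 1) (fun p _ => A p (qttBit p (k - 1)))
          = (1 : Matrix (ι 0) (ι 0) ℝ) * A 0 (qttBit 0 (k - 1)) := rfl
      ext i jc
      rcases jc with j | u <;>
        simp [h, ht, hb0, Matrix.fromCols]
  | succ q ih =>
    rw [ttProd_succ, ← Matrix.mul_assoc, ih]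
    have hsplit := mod_pow_succ_eq_zero_iff (q + 1) k
    have hbz := qttBit_eq_zero_iff (q + 1) k
    by_cases hbit : qttBit (q + 1) k = 0
    · by_cases hm : k % 2 ^ (q + 1) = 0
      · have hm2 : k % 2 ^ (q + 1 + 1) = 0 := hsplit.mpr ⟨hm, hbz.mp hbit⟩
        rw [if_pos hm, if_pos hbit, if_pos hm2, Matrix.fromCols_mul_fromBlocks]
        simp
      · have hm2 : ¬ k % 2 ^ (q + 1 + 1) = 0 := fun hc => hm (hsplit.mp hc).1
        rw [if_neg hm, if_pos hbit, if_neg hm2, Matrix.fromCols_mul_fromBlocks]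
        have hb' : qttBit (q + 1) (k - 1) = 0 := by
          rw [qttBit_pred _ _ hm]; exact hbit
        have ht : ttProd ι (q + 1 + 1) (fun p _ => A p (qttBit p (k - 1)))
            = ttProd ι (q + 1) (fun p _ => A p (qttBit p (k - 1))) * A (q + 1) 0 := by
          rw [ttProd_succ, hb']
        rw [ht]
        simp
    · have h1 : k / 2 ^ (q + 1) % 2 = 1 := by
        have h' : ¬ k / 2 ^ (q + 1) % 2 = 0 := fun hc => hbit (hbz.mpr hc)
        omega
      have hm2 : ¬ k % 2 ^ (q + 1 + 1) = 0 := fun hc => by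
        have := (hsplit.mp hc).2; omega
      by_cases hm : k % 2 ^ (q + 1) = 0
      · rw [if_pos hm, if_neg hbit, if_neg hm2, Matrix.fromCols_mul_fromBlocks]
        have ht : ttProd ι (q + 1 + 1) (fun p _ => A p (qttBit p (k - 1)))
            = ttProd ι (q + 2) (fun p' _ => A p' (if p' = q + 1 then 0 else 1)) := by
          apply ttProd_congr
          intro p hp
          rw [qttBit_pred_of_pow q k hm h1 p (by omega)]
        rw [ht]
        ext i jc
        rcases jc with j | u <;>
          simp [Matrix.mul_apply, Matrix.fromCols, Unique.eq_default i]
      · rw [if_neg hm, if_neg hbit, if_neg hm2, Matrix.fromCols_mul_fromBlocks]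
        have hb' : qttBit (q + 1) (k - 1) = 1 := by
          rw [qttBit_pred _ _ hm]
          have : (qttBit (q + 1) k : Fin 2) ≠ 0 := hbit
          omega
        have ht : ttProd ι (q + 1 + 1) (fun p _ => A p (qttBit p (k - 1)))
            = ttProd ι (q + 1) (fun p _ => A p (qttBit p (k - 1))) * A (q + 1) 1 := by
          rw [ttProd_succ, hb']
        rw [ht]
        simp


/-- QTT representation of the right shift `b = [x, a(0), …, a(2^d-2)]`:
the shifted vector has explicit QTT cores whose ranks exceed those of `a`
by at most one.  Here `d = e + 2`. -/
theorem qtt_right_shift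
    (e : ℕ)
    (ι : ℕ → Type) [∀ p, Fintype (ι p)] [∀ p, DecidableEq (ι p)]
    [Unique (ι 0)] [Unique (ι (e + 2))]
    (A : (p : ℕ) → Fin 2 → Matrix (ι p) (ι (p + 1)) ℝ)
    (a b : Fin (2 ^ (e + 2)) → ℝ) (x : ℝ)
    (ha : ∀ k : Fin (2 ^ (e + 2)),
      a k = ttProd ι (e + 2) (fun p _ => A p (qttBit p (k : ℕ))) default default)
    (hb0 : b ⟨0, by positivity⟩ = x)
    (hbs : ∀ k : ℕ, (h : k + 1 < 2 ^ (e + 2)) → b ⟨k + 1, h⟩ = a ⟨k, by omega⟩) :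
    ∀ k : Fin (2 ^ (e + 2)),
      b k =
        ((Matrix.of fun (i : ι 0) (jc : ι 1 ⊕ Unit) =>
            if qttBit 0 (k : ℕ) = 0 then
              Sum.elim (fun _ => (0 : ℝ)) (fun _ => 1) jc
            else Sum.elim (fun j => A 0 0 i j) (fun _ => 0) jc)
          * ttProd (fun p => ι (p + 1) ⊕ Unit) e (fun q _ =>
              if qttBit (q + 1) (k : ℕ) = 0 then
                Matrix.fromBlocks (A (q + 1) 0) 0 0 1
              else
                Matrix.fromBlocks (A (q + 1) 1) 0
                  (Matrix.of fun (_ : Unit) j =>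
                    ttProd ι (q + 2)
                      (fun p' _ => A p' (if p' = q + 1 then 0 else 1)) default j) 0)
          * Matrix.of fun (ic : ι (e + 1) ⊕ Unit) (j : ι (e + 2)) =>
              if qttBit (e + 1) (k : ℕ) = 0 then
                Sum.elim (fun i => A (e + 1) 0 i j) (fun _ => x) ic
              else
                Sum.elim (fun i => A (e + 1) 1 i j)
                  (fun _ => ttProd ι (e + 2)
                    (fun p' _ => A p' (if p' = e + 1 then 0 else 1)) default j) ic)
          default default := by
  rintro ⟨K, hK⟩
  rw [qtt_partial ι A K e]
  have hsplit := mod_pow_succ_eq_zero_iff (e + 1) K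
  have hbz := qttBit_eq_zero_iff (e + 1) K
  have hpos : 0 < 2 ^ (e + 1) := by positivity
  by_cases hbit : qttBit (e + 1) K = 0
  · by_cases hm : K % 2 ^ (e + 1) = 0
    · -- K = 0, b k = x
      have hm2 : K % 2 ^ (e + 2) = 0 := hsplit.mpr ⟨hm, hbz.mp hbit⟩
      have hK0 : K = 0 := by rw [Nat.mod_eq_of_lt hK] at hm2; exact hm2
      subst hK0
      have hb0' : b ⟨0, hK⟩ = x := hb0
      rw [hb0', if_pos hm]
      simp [Matrix.mul_apply, Fintype.sum_sum_type, Matrix.fromCols, hbit]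
    · -- generic case, bit (e+1) of K-1 is 0
      have hKpos : 0 < K := by
        rcases Nat.eq_zero_or_pos K with h | h
        · exact absurd (by rw [h]; exact Nat.zero_mod _) hm
        · exact h
      have hb' : qttBit (e + 1) (K - 1) = 0 := by
        rw [qttBit_pred _ _ hm]; exact hbit
      have hbk : b ⟨K, hK⟩ = a ⟨K - 1, by omega⟩ := by
        have h3 := hbs (K - 1) (by omega)
        have h2 : K - 1 + 1 = K := by omega
        simp only [h2] at h3
        exact h3
      rw [hbk, ha, if_neg hm, ttProd_succ, hb']
      simp [Matrix.mul_apply, Fintype.sum_sum_type, Matrix.fromCols, hbit]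
  · have h1 : K / 2 ^ (e + 1) % 2 = 1 := by
      have h' : ¬ K / 2 ^ (e + 1) % 2 = 0 := fun hc => hbit (hbz.mpr hc)
      omega
    by_cases hm : K % 2 ^ (e + 1) = 0
    · -- K = 2^(e+1)
      have hdd : K / 2 ^ (e + 2) = K / 2 ^ (e + 1) / 2 := by
        rw [pow_succ, Nat.div_div_eq_div_mul]
      have hz : K / 2 ^ (e + 2) = 0 := Nat.div_eq_of_lt hK
      have hdiv1 : K / 2 ^ (e + 1) = 1 := by omega
      have hKpos : 0 < K := by
        have hd := Nat.div_add_mod K (2 ^ (e + 1))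
        rw [hdiv1, hm, mul_one] at hd
        omega
      have hbk : b ⟨K, hK⟩ = a ⟨K - 1, by omega⟩ := by
        have h3 := hbs (K - 1) (by omega)
        have h2 : K - 1 + 1 = K := by omega
        simp only [h2] at h3
        exact h3
      rw [hbk, ha, if_pos hm]
      have ht : ttProd ι (e + 2)
            (fun p _ => A p (qttBit p ((⟨K - 1, by omega⟩ : Fin (2 ^ (e + 2))) : ℕ)))
          = ttProd ι (e + 2) (fun p' _ => A p' (if p' = e + 1 then 0 else 1)) := by
        apply ttProd_congr
        intro p hp
        have := qttBit_pred_of_pow e K hm h1 p (by omega)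
        rw [show ((⟨K - 1, by omega⟩ : Fin (2 ^ (e + 2))) : ℕ) = K - 1 from rfl, this]
      rw [ht]
      simp [Matrix.mul_apply, Fintype.sum_sum_type, Matrix.fromCols, hbit]
    · -- generic case with bit 1
      have hKpos : 0 < K := by
        rcases Nat.eq_zero_or_pos K with h | h
        · exact absurd (by rw [h]; exact Nat.zero_mod _) hm
        · exact h
      have hb' : qttBit (e + 1) (K - 1) = 1 := by
        rw [qttBit_pred _ _ hm]
        have : (qttBit (e + 1) K : Fin 2) ≠ 0 := hbit
        omega
      have hbk : b ⟨K, hK⟩ = a ⟨K - 1, by omega⟩ := by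
        have h3 := hbs (K - 1) (by omega)
        have h2 : K - 1 + 1 = K := by omega
        simp only [h2] at h3
        exact h3
      rw [hbk, ha, if_neg hm, ttProd_succ, hb']
      simp [Matrix.mul_apply, Fintype.sum_sum_type, Matrix.fromCols, hbit]
end

section
/- Let 0 < α < 1, m, λ ∈ ℝ, m ≠ 0. Then y(t) = y₀ E_α(m t^α) + (λ/m) E_α(m t^α) - λ/m solves the fractional initial value problem D^α_* y(t) = m y(t) + λ with y(0) = y₀, where D^α_* is the Caputo derivative. -/
open Real

/-- The Mittag-Leffler function `E_α(z) = Σ_{j=0}^∞ z^j / Γ(jα + 1)`. -/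
noncomputable def mittagLeffler (α z : ℝ) : ℝ :=
  ∑' j : ℕ, z ^ j / Real.Gamma ((j : ℝ) * α + 1)

section MLAux
open MeasureTheory intervalIntegral Set

lemma ML.gamma_lb {x : ℝ} (hx : 1 ≤ x) :
    (Nat.factorial (Nat.floor x) : ℝ) ≤ Real.Gamma (x + 1) := by
  have hn : 1 ≤ Nat.floor x := (Nat.one_le_floor_iff x).mpr (by exact_mod_cast hx)
  have h2 : (2 : ℝ) ≤ (Nat.floor x : ℝ) + 1 := by
    have := (Nat.one_le_cast (α := ℝ)).mpr hn; linarith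
  have hfl : (Nat.floor x : ℝ) ≤ x := Nat.floor_le (by linarith)
  calc (Nat.factorial (Nat.floor x) : ℝ) = Real.Gamma ((Nat.floor x : ℝ) + 1) :=
        (Real.Gamma_nat_eq_factorial _).symm
    _ ≤ Real.Gamma (x + 1) :=
        Real.Gamma_strictMonoOn_Ici.monotoneOn h2 (by simp only [Set.mem_Ici]; linarith)
          (by linarith)

lemma ML.summable_aux {α : ℝ} (hα : 0 < α) {r : ℝ} (hr : 0 ≤ r) :
    Summable (fun j : ℕ => r ^ j / Real.Gamma ((j : ℝ) * α + 1)) := by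
  obtain ⟨N, hN⟩ : ∃ N : ℕ, 1 ≤ (N : ℝ) * α := by
    refine ⟨⌈α⁻¹⌉₊, ?_⟩
    have h1 : α⁻¹ ≤ (⌈α⁻¹⌉₊ : ℝ) := Nat.le_ceil _
    calc (1:ℝ) = α⁻¹ * α := by field_simp
      _ ≤ (⌈α⁻¹⌉₊ : ℝ) * α := by nlinarith
  rw [← summable_nat_add_iff N]
  set R : ℝ := (2 * r + 2) ^ α⁻¹ with hR
  have hb : (1:ℝ) ≤ 2 * r + 2 := by linarith
  have hR1 : 1 ≤ R := Real.one_le_rpow hb (by positivity)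
  have hR0 : 0 < R := by linarith
  have hRα : R ^ α = 2 * r + 2 := by
    rw [hR, ← Real.rpow_mul (by linarith : (0:ℝ) ≤ 2 * r + 2),
      inv_mul_cancel₀ hα.ne', Real.rpow_one]
  have hq0 : 0 ≤ r / (2 * r + 2) := by positivity
  have hq1 : r / (2 * r + 2) < 1 := by rw [div_lt_one (by linarith)]; linarith
  have key : ∀ j : ℕ, r ^ (j + N) / Real.Gamma (((j + N : ℕ) : ℝ) * α + 1)
      ≤ (Real.exp R * R) * (r / (2 * r + 2)) ^ j := by
    intro j
    set k := j + N with hkdef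
    have hk : 1 ≤ (k : ℝ) * α := by
      have : (N : ℝ) ≤ (k : ℝ) := by exact_mod_cast Nat.le_add_left N j
      nlinarith
    set n := Nat.floor ((k:ℝ)*α) with hn
    have hΓ : (Nat.factorial n : ℝ) ≤ Real.Gamma ((k:ℝ)*α + 1) := ML.gamma_lb hk
    have hfact : R ^ n ≤ (Nat.factorial n : ℝ) * Real.exp R := by
      have hterm : R ^ n / (Nat.factorial n : ℝ) ≤ Real.exp R := by
        refine le_trans ?_ (Real.sum_le_exp_of_nonneg hR0.le (n + 1))
        exact Finset.single_le_sum (f := fun i => R ^ i / (Nat.factorial i : ℝ))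
          (fun i _ => by positivity) (Finset.self_mem_range_succ _)
      rw [div_le_iff₀ (by positivity)] at hterm
      linarith
    have hpow : R ^ ((k:ℝ)*α - 1) ≤ R ^ n := by
      rw [← Real.rpow_natCast R n]
      apply Real.rpow_le_rpow_of_exponent_le hR1
      have := Nat.lt_floor_add_one ((k:ℝ)*α)
      push_cast
      linarith
    have h3 : R ^ ((k:ℝ)*α - 1) = R ^ ((k:ℝ)*α) / R := by
      rw [Real.rpow_sub hR0, Real.rpow_one]
    have h5 : R ^ ((k:ℝ)*α) ≤ (Nat.factorial n : ℝ) * Real.exp R * R := by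
      have := hpow.trans hfact
      rw [h3, div_le_iff₀ hR0] at this
      exact this
    have hexp : 0 < Real.exp R := Real.exp_pos R
    have hGam : R ^ ((k:ℝ)*α) ≤ Real.Gamma ((k:ℝ)*α + 1) * (R * Real.exp R) := by
      nlinarith [mul_le_mul_of_nonneg_right hΓ (show (0:ℝ) ≤ Real.exp R * R by positivity)]
    have hΓpos : 0 < Real.Gamma ((k:ℝ)*α + 1) := Real.Gamma_pos_of_pos (by linarith)
    have hRk : R ^ ((k:ℝ)*α) = (2*r+2) ^ k := by
      rw [mul_comm (k:ℝ) α, Real.rpow_mul hR0.le, hRα, Real.rpow_natCast]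
    have h2rk : (0:ℝ) < (2*r+2) ^ k := by positivity
    rw [div_le_iff₀ hΓpos]
    have hqk : (r / (2*r+2)) ^ j * (2*r+2)^k ≥ r ^ k := by
      have : (r / (2*r+2)) ^ k * (2*r+2)^k = r ^ k := by
        rw [div_pow, div_mul_cancel₀ _ h2rk.ne']
      rw [← this]
      apply mul_le_mul_of_nonneg_right _ h2rk.le
      calc (r / (2*r+2)) ^ k = (r / (2*r+2)) ^ j * (r / (2*r+2)) ^ N := by
            rw [← pow_add]
        _ ≤ (r / (2*r+2)) ^ j * 1 :=
            mul_le_mul_of_nonneg_left (pow_le_one₀ hq0 hq1.le) (by positivity)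
        _ = (r / (2*r+2)) ^ j := mul_one _
    calc r ^ k ≤ (r / (2*r+2)) ^ j * (2*r+2)^k := hqk
      _ = (r / (2*r+2)) ^ j * R ^ ((k:ℝ)*α) := by rw [hRk]
      _ ≤ (r / (2*r+2)) ^ j * (Real.Gamma ((k:ℝ)*α + 1) * (R * Real.exp R)) :=
          mul_le_mul_of_nonneg_left hGam (by positivity)
      _ = Real.exp R * R * (r / (2*r+2)) ^ j * Real.Gamma ((k:ℝ)*α + 1) := by ring
  exact Summable.of_nonneg_of_le (fun j => by positivity) key
    ((summable_geometric_of_lt_one hq0 hq1).mul_left _)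

lemma ML.ae_imp : ∀ᵐ x : ℝ ∂volume, x ∈ Set.uIoc (0:ℝ) 1 → x ∈ Set.Ioo (0:ℝ) 1 := by
  have h2 : ∀ᵐ x : ℝ ∂volume, x ≠ 1 :=
    ae_iff.mpr (by simp [Set.setOf_eq_eq_singleton'])
  filter_upwards [h2] with x hne hx
  rw [Set.uIoc_of_le zero_le_one] at hx
  exact ⟨hx.1, lt_of_le_of_ne hx.2 hne⟩

lemma ML.ae_ioo : ∀ᵐ x ∂(volume.restrict (Set.uIoc (0:ℝ) 1)), x ∈ Set.Ioo (0:ℝ) 1 := by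
  filter_upwards [ae_restrict_mem measurableSet_uIoc, ae_restrict_of_ae ML.ae_imp] with x h1 h2
  exact h2 h1

lemma ML.norm_eq {p q : ℝ} {x : ℝ} (hx : x ∈ Set.Ioo (0:ℝ) 1) :
    ‖(x:ℂ) ^ ((p:ℂ)-1) * ((1:ℂ)-x) ^ ((q:ℂ)-1)‖ = x ^ (p-1) * (1-x) ^ (q-1) := by
  have h1x : (0:ℝ) < 1 - x := by linarith [hx.2]
  rw [norm_mul,
    Complex.norm_cpow_eq_rpow_re_of_pos hx.1,
    show ((1:ℂ) - (x:ℂ)) = ((1 - x : ℝ) : ℂ) by push_cast; ring,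
    Complex.norm_cpow_eq_rpow_re_of_pos h1x]
  norm_num

lemma ML.beta_integrable01 {p q : ℝ} (hp : 0 < p) (hq : 0 < q) :
    IntervalIntegrable (fun x : ℝ => x ^ (p-1) * (1-x) ^ (q-1)) volume 0 1 := by
  have h := Complex.betaIntegral_convergent (u := (p:ℂ)) (v := (q:ℂ)) (by simpa using hp)
    (by simpa using hq)
  apply h.norm.congr_ae
  filter_upwards [ML.ae_ioo] with x hx
  exact ML.norm_eq hx

lemma ML.beta_integral01 {p q : ℝ} (hp : 0 < p) (hq : 0 < q) :
    ∫ x in (0:ℝ)..1, x ^ (p-1) * (1-x) ^ (q-1)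
      = Real.Gamma p * Real.Gamma q / Real.Gamma (p+q) := by
  have hB := Complex.Gamma_mul_Gamma_eq_betaIntegral (s := (p:ℂ)) (t := (q:ℂ))
    (by simpa using hp) (by simpa using hq)
  have hΓne : Complex.Gamma ((p:ℂ) + q) ≠ 0 := by
    rw [show ((p:ℂ) + q) = ((p + q : ℝ) : ℂ) by push_cast; ring, Complex.Gamma_ofReal]
    exact_mod_cast (Real.Gamma_pos_of_pos (by linarith)).ne'
  have hBval : Complex.betaIntegral p q
      = Complex.Gamma p * Complex.Gamma q / Complex.Gamma ((p:ℂ)+q) := by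
    rw [hB, mul_div_cancel_left₀ _ hΓne]
  have hcoe : ((∫ x in (0:ℝ)..1, x ^ (p-1) * (1-x) ^ (q-1) : ℝ) : ℂ)
      = Complex.betaIntegral p q := by
    rw [← intervalIntegral.integral_ofReal, Complex.betaIntegral]
    apply intervalIntegral.integral_congr_ae
    filter_upwards [ML.ae_imp] with x hmem hx
    have hx' := hmem hx
    have h1x : (0:ℝ) ≤ 1 - x := by linarith [hx'.2.le]
    rw [Complex.ofReal_mul, Complex.ofReal_cpow hx'.1.le, Complex.ofReal_cpow h1x]
    push_cast
    ring
  have := hcoe.trans hBval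
  rw [show Complex.Gamma p = ((Real.Gamma p : ℝ) : ℂ) from Complex.Gamma_ofReal p,
    show Complex.Gamma q = ((Real.Gamma q : ℝ) : ℂ) from Complex.Gamma_ofReal q,
    show Complex.Gamma ((p:ℂ)+q) = ((Real.Gamma (p+q) : ℝ) : ℂ) by
      rw [show ((p:ℂ) + q) = ((p + q : ℝ) : ℂ) by push_cast; ring, Complex.Gamma_ofReal]] at this
  exact_mod_cast this

lemma ML.ae_impt {t : ℝ} (ht : 0 < t) :
    ∀ᵐ x : ℝ ∂volume, x ∈ Set.uIoc (0:ℝ) t → x ∈ Set.Ioo (0:ℝ) t := by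
  have h2 : ∀ᵐ x : ℝ ∂volume, x ≠ t :=
    ae_iff.mpr (by simp [Set.setOf_eq_eq_singleton'])
  filter_upwards [h2] with x hne hx
  rw [Set.uIoc_of_le ht.le] at hx
  exact ⟨hx.1, lt_of_le_of_ne hx.2 hne⟩

lemma ML.ae_ioot {t : ℝ} (ht : 0 < t) :
    ∀ᵐ x ∂(volume.restrict (Set.uIoc (0:ℝ) t)), x ∈ Set.Ioo (0:ℝ) t := by
  filter_upwards [ae_restrict_mem measurableSet_uIoc, ae_restrict_of_ae (ML.ae_impt ht)]
    with x h1 h2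
  exact h2 h1

lemma ML.beta_integrable {p q : ℝ} (hp : 0 < p) (hq : 0 < q) {t : ℝ} (ht : 0 < t) :
    IntervalIntegrable (fun s : ℝ => s ^ (p-1) * (t-s) ^ (q-1)) volume 0 t := by
  have h0 := (ML.beta_integrable01 hp hq).comp_mul_left (c := t⁻¹)
  rw [show (0:ℝ) / t⁻¹ = 0 by simp, show (1:ℝ) / t⁻¹ = t by simp] at h0
  have h1 := h0.const_mul (t ^ (p-1) * t ^ (q-1))
  apply h1.congr_ae
  filter_upwards [ML.ae_ioot ht] with x hx
  have hx0 : (0:ℝ) ≤ x := hx.1.le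
  have htx : (0:ℝ) ≤ t - x := by linarith [hx.2.le]
  have htp : (0:ℝ) < t ^ (p-1) := Real.rpow_pos_of_pos ht _
  have htq : (0:ℝ) < t ^ (q-1) := Real.rpow_pos_of_pos ht _
  have e1 : t⁻¹ * x = x / t := by ring
  have e2 : (1 : ℝ) - x / t = (t - x) / t := by field_simp
  rw [e1, e2, Real.div_rpow hx0 ht.le, Real.div_rpow htx ht.le]
  field_simp

lemma ML.beta_value {p q : ℝ} (hp : 0 < p) (hq : 0 < q) {t : ℝ} (ht : 0 < t) :
    ∫ s in (0:ℝ)..t, s ^ (p-1) * (t-s) ^ (q-1)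
      = Real.Gamma p * Real.Gamma q / Real.Gamma (p+q) * t ^ (p+q-1) := by
  have hB := Complex.Gamma_mul_Gamma_eq_betaIntegral (s := (p:ℂ)) (t := (q:ℂ))
    (by simpa using hp) (by simpa using hq)
  have hΓne : Complex.Gamma ((p:ℂ) + q) ≠ 0 := by
    rw [show ((p:ℂ) + q) = ((p + q : ℝ) : ℂ) by push_cast; ring, Complex.Gamma_ofReal]
    exact_mod_cast (Real.Gamma_pos_of_pos (by linarith)).ne'
  have hBval : Complex.betaIntegral p q
      = Complex.Gamma p * Complex.Gamma q / Complex.Gamma ((p:ℂ)+q) := by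
    rw [hB, mul_div_cancel_left₀ _ hΓne]
  have hscaled := Complex.betaIntegral_scaled (p:ℂ) (q:ℂ) ht
  have hcoe : ((∫ s in (0:ℝ)..t, s ^ (p-1) * (t-s) ^ (q-1) : ℝ) : ℂ)
      = ∫ x in (0:ℝ)..t, (x:ℂ) ^ ((p:ℂ)-1) * ((t:ℂ) - x) ^ ((q:ℂ)-1) := by
    rw [← intervalIntegral.integral_ofReal]
    apply intervalIntegral.integral_congr_ae
    filter_upwards [ML.ae_impt ht] with x hmem hx
    have hx' := hmem hx
    have htx : (0:ℝ) ≤ t - x := by linarith [hx'.2.le]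
    rw [Complex.ofReal_mul, Complex.ofReal_cpow hx'.1.le, Complex.ofReal_cpow htx]
    push_cast
    ring
  have key : ((∫ s in (0:ℝ)..t, s ^ (p-1) * (t-s) ^ (q-1) : ℝ) : ℂ)
      = ((Real.Gamma p * Real.Gamma q / Real.Gamma (p+q) * t ^ (p+q-1) : ℝ) : ℂ) := by
    rw [hcoe, hscaled, hBval,
      show ((p:ℂ) + q - 1) = ((p + q - 1 : ℝ) : ℂ) by push_cast; ring,
      ← Complex.ofReal_cpow ht.le,
      show Complex.Gamma p = ((Real.Gamma p : ℝ) : ℂ) from Complex.Gamma_ofReal p,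
      show Complex.Gamma q = ((Real.Gamma q : ℝ) : ℂ) from Complex.Gamma_ofReal q,
      show Complex.Gamma ((p:ℂ)+q) = ((Real.Gamma (p+q) : ℝ) : ℂ) by
        rw [show ((p:ℂ) + q) = ((p + q : ℝ) : ℂ) by push_cast; ring, Complex.Gamma_ofReal]]
    push_cast
    ring
  exact_mod_cast key
lemma ML.summable_jaux {α : ℝ} (hα : 0 < α) {r : ℝ} (hr : 0 ≤ r) :
    Summable (fun j : ℕ => (j:ℝ) * r ^ j / Real.Gamma ((j : ℝ) * α + 1)) := by
  refine Summable.of_nonneg_of_le (fun j => ?_) (fun j => ?_)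
    (ML.summable_aux hα (r := 2*r) (by linarith))
  · have hΓ : 0 < Real.Gamma ((j:ℝ)*α + 1) :=
      Real.Gamma_pos_of_pos (by positivity)
    exact div_nonneg (by positivity) hΓ.le
  · have hΓ : 0 < Real.Gamma ((j:ℝ)*α + 1) :=
      Real.Gamma_pos_of_pos (by positivity)
    rw [div_le_div_iff_of_pos_right hΓ]  -- guess
    calc (j:ℝ) * r ^ j ≤ (2:ℝ) ^ j * r ^ j := by
          apply mul_le_mul_of_nonneg_right _ (by positivity)
          exact_mod_cast (Nat.lt_two_pow_self (n := j)).le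
      _ = (2 * r) ^ j := (mul_pow 2 r j).symm

lemma ML.rpow_pow {u : ℝ} (hu : 0 ≤ u) (α : ℝ) (j : ℕ) :
    (u ^ α) ^ j = u ^ ((j:ℝ) * α) := by
  rw [← Real.rpow_natCast (u ^ α) j, ← Real.rpow_mul hu, mul_comm]

lemma ML.ml_eq {α m : ℝ} {u : ℝ} (hu : 0 ≤ u) :
    mittagLeffler α (m * u ^ α)
      = ∑' j : ℕ, m ^ j / Real.Gamma ((j:ℝ)*α + 1) * u ^ ((j:ℝ)*α) := by
  unfold mittagLeffler
  congr 1 with j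
  rw [mul_pow, ML.rpow_pow hu]
  ring

lemma ML.summable_F {α m : ℝ} (hα : 0 < α) {u : ℝ} (hu : 0 ≤ u) :
    Summable (fun j : ℕ => m ^ j / Real.Gamma ((j:ℝ)*α + 1) * u ^ ((j:ℝ)*α)) := by
  rw [← summable_abs_iff]
  apply Summable.congr (ML.summable_aux hα (r := |m| * u ^ α) (by positivity))
  intro j
  have hΓ : 0 < Real.Gamma ((j:ℝ)*α + 1) := Real.Gamma_pos_of_pos (by positivity)
  have hru : 0 ≤ u ^ ((j:ℝ)*α) := Real.rpow_nonneg hu _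
  rw [abs_mul, abs_div, abs_of_pos hΓ, abs_of_nonneg hru, abs_pow, mul_pow, ML.rpow_pow hu]
  ring

lemma ML.hasDeriv {α m : ℝ} (hα : 0 < α) {s : ℝ} (hs : 0 < s) :
    HasDerivAt (fun u : ℝ => ∑' j : ℕ, m ^ j / Real.Gamma ((j:ℝ)*α + 1) * u ^ ((j:ℝ)*α))
      (∑' j : ℕ, m ^ j / Real.Gamma ((j:ℝ)*α + 1) * ((j:ℝ)*α * s ^ ((j:ℝ)*α - 1))) s := by
  have h2s : (0:ℝ) < 2 * s := by linarith
  refine hasDerivAt_tsum_of_isPreconnected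
    (u := fun j : ℕ => |m| ^ j / Real.Gamma ((j:ℝ)*α + 1) * ((j:ℝ)*α * (2*s) ^ ((j:ℝ)*α)) * (2/s))
    (t := Set.Ioo (s/2) (2*s))
    (g := fun (j : ℕ) (u : ℝ) => m ^ j / Real.Gamma ((j:ℝ)*α + 1) * u ^ ((j:ℝ)*α))
    (g' := fun (j : ℕ) (x : ℝ) => m ^ j / Real.Gamma ((j:ℝ)*α + 1) * ((j:ℝ)*α * x ^ ((j:ℝ)*α - 1)))
    (y₀ := s) (y := s)
    ?_ isOpen_Ioo (isPreconnected_Ioo) ?_ ?_ ?_ ?_ ?_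
  · -- summability of the bound
    have : Summable (fun j : ℕ => (j:ℝ) * (|m| * (2*s) ^ α) ^ j / Real.Gamma ((j:ℝ)*α + 1)) :=
      ML.summable_jaux hα (by positivity)
    apply Summable.congr ((this.mul_left (2/s * α)))
    intro j
    rw [mul_pow, ML.rpow_pow h2s.le]
    field_simp
  · -- each term has deriv
    intro j x hx
    have hx0 : 0 < x := lt_trans (by linarith [hx.1]) hx.1
    exact (Real.hasDerivAt_rpow_const (p := (j:ℝ)*α) (Or.inl hx0.ne')).const_mul _
  · -- bound
    intro j x hx
    have hx0 : 0 < x := lt_trans (by linarith [hx.1]) hx.1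
    have hΓ : 0 < Real.Gamma ((j:ℝ)*α + 1) := Real.Gamma_pos_of_pos (by positivity)
    rw [Real.norm_eq_abs, abs_mul, abs_div, abs_of_pos hΓ, abs_pow,
      abs_of_nonneg (show (0:ℝ) ≤ (j:ℝ)*α * x ^ ((j:ℝ)*α - 1) by positivity)]
    show _ ≤ |m| ^ j / Real.Gamma ((j:ℝ)*α + 1) * ((j:ℝ)*α * (2*s) ^ ((j:ℝ)*α)) * (2/s)
    have hb1 : x ^ ((j:ℝ)*α) ≤ (2*s) ^ ((j:ℝ)*α) :=
      Real.rpow_le_rpow hx0.le hx.2.le (by positivity)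
    have hb2 : x⁻¹ ≤ 2/s := by
      rw [show (2:ℝ)/s = (s/2)⁻¹ by field_simp]
      exact inv_anti₀ (by linarith) hx.1.le
    have hxs : x ^ ((j:ℝ)*α - 1) ≤ (2*s) ^ ((j:ℝ)*α) * (2/s) := by
      rw [Real.rpow_sub hx0, Real.rpow_one, div_eq_mul_inv]
      exact mul_le_mul hb1 hb2 (by positivity) (by positivity)
    calc |m| ^ j / Real.Gamma ((j:ℝ)*α + 1) * ((j:ℝ)*α * x ^ ((j:ℝ)*α - 1))
        ≤ |m| ^ j / Real.Gamma ((j:ℝ)*α + 1) * ((j:ℝ)*α * ((2*s) ^ ((j:ℝ)*α) * (2/s))) := by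
          apply mul_le_mul_of_nonneg_left _ (by positivity)
          exact mul_le_mul_of_nonneg_left hxs (by positivity)
      _ = |m| ^ j / Real.Gamma ((j:ℝ)*α + 1) * ((j:ℝ)*α * (2*s) ^ ((j:ℝ)*α)) * (2/s) := by
          ring
  · exact ⟨by linarith, by linarith⟩
  · exact ML.summable_F hα hs.le
  · exact ⟨by linarith, by linarith⟩

end MLAux

open MeasureTheory in
theorem constant_forcing_solution (α m lam y0 : ℝ)
    (hα0 : 0 < α) (hα1 : α < 1) (hm : m ≠ 0)
    (y : ℝ → ℝ)
    (hy : ∀ t : ℝ, y t = y0 * mittagLeffler α (m * t ^ α)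
        + (lam / m) * mittagLeffler α (m * t ^ α) - lam / m) :
    y 0 = y0 ∧ ∀ t : ℝ, 0 < t →
      (1 / Real.Gamma (1 - α)) * ∫ s in (0 : ℝ)..t, deriv y s / (t - s) ^ α
        = m * y t + lam := by
  have hq : (0:ℝ) < 1 - α := by linarith
  constructor
  · rw [hy 0, Real.zero_rpow hα0.ne', mul_zero]
    have h1 : mittagLeffler α 0 = 1 := by
      unfold mittagLeffler
      rw [tsum_eq_single 0 (fun j hj => by simp [zero_pow hj])]
      simp [Real.Gamma_one]
    rw [h1]; ring
  intro t ht
  set c : ℝ := y0 + lam / m with hc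
  -- derivative of y on the positive axis
  have hderiv : ∀ s : ℝ, 0 < s → deriv y s
      = c * ∑' j : ℕ, m ^ j / Real.Gamma ((j:ℝ)*α + 1) * ((j:ℝ)*α * s ^ ((j:ℝ)*α - 1)) := by
    intro s hs
    have hEq : y =ᶠ[nhds s]
        (fun u => c * (∑' j : ℕ, m ^ j / Real.Gamma ((j:ℝ)*α + 1) * u ^ ((j:ℝ)*α)) - lam/m) := by
      filter_upwards [IsOpen.mem_nhds isOpen_Ioi hs] with u hu
      rw [hy u, ML.ml_eq (le_of_lt hu)]
      ring
    rw [hEq.deriv_eq]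
    exact (((ML.hasDeriv hα0 hs).const_mul c).sub_const (lam/m)).deriv
  -- the term functions
  set K : ℕ → ℝ := fun j => c * (m ^ j / Real.Gamma ((j:ℝ)*α + 1)) * ((j:ℝ)*α) with hK
  set P : ℕ → ℝ → ℝ := fun j s => s ^ ((j:ℝ)*α - 1) * (t-s) ^ (1 - α - 1) with hP
  have haemem : ∀ᵐ s ∂(volume.restrict (Set.Ioc 0 t)), s ∈ Set.Ioo 0 t := by
    have := ML.ae_ioot ht; rwa [Set.uIoc_of_le ht.le] at this
  -- pointwise identity on (0,t)
  have hptwise : ∀ s ∈ Set.Ioo (0:ℝ) t, deriv y s / (t-s) ^ α = ∑' j : ℕ, K j * P j s := by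
    intro s hs
    have hts : (0:ℝ) < t - s := by linarith [hs.2]
    have hw : (t-s) ^ (1 - α - 1) = ((t-s) ^ α)⁻¹ := by
      rw [show (1 - α - 1 : ℝ) = -α by ring, Real.rpow_neg hts.le]
    calc deriv y s / (t-s) ^ α
        = c * (∑' j : ℕ, m ^ j / Real.Gamma ((j:ℝ)*α + 1) * ((j:ℝ)*α * s ^ ((j:ℝ)*α - 1)))
            * ((t-s) ^ α)⁻¹ := by rw [hderiv s hs.1]; ring
      _ = c * ∑' j : ℕ, (m ^ j / Real.Gamma ((j:ℝ)*α + 1) * ((j:ℝ)*α * s ^ ((j:ℝ)*α - 1))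
            * ((t-s) ^ α)⁻¹) := by rw [tsum_mul_right]; ring
      _ = ∑' j : ℕ, c * (m ^ j / Real.Gamma ((j:ℝ)*α + 1) * ((j:ℝ)*α * s ^ ((j:ℝ)*α - 1))
            * ((t-s) ^ α)⁻¹) := by rw [tsum_mul_left]
      _ = ∑' j : ℕ, K j * P j s := by
            apply tsum_congr; intro j; rw [hK, hP]; simp only []; rw [hw]; ring
  -- integrability of each term
  have hPint : ∀ j : ℕ, 0 < j → IntegrableOn (fun s => P j s) (Set.Ioc 0 t) volume := by
    intro j hj
    have hp : 0 < (j:ℝ)*α := by positivity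
    have := (ML.beta_integrable hp hq ht).1
    simpa [hP] using this
  have hGint : ∀ j : ℕ, IntegrableOn (fun s => K j * P j s) (Set.Ioc 0 t) volume := by
    intro j
    rcases Nat.eq_zero_or_pos j with rfl | hj
    · have : K 0 = 0 := by rw [hK]; simp
      simp [this]
    · exact ((hPint j hj).const_mul (K j))
  -- value of each term integral
  have hPval : ∀ j : ℕ, 0 < j → ∫ s in Set.Ioc (0:ℝ) t, P j s
      = Real.Gamma ((j:ℝ)*α) * Real.Gamma (1-α) / Real.Gamma ((j:ℝ)*α + (1-α))
          * t ^ ((j:ℝ)*α + (1-α) - 1) := by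
    intro j hj
    have hp : 0 < (j:ℝ)*α := by positivity
    rw [← intervalIntegral.integral_of_le ht.le]
    have := ML.beta_value hp hq ht
    simpa [hP] using this
  -- Gamma recurrence
  have hΓrec : ∀ j : ℕ, 0 < j →
      Real.Gamma ((j:ℝ)*α + 1) = ((j:ℝ)*α) * Real.Gamma ((j:ℝ)*α) := by
    intro j hj
    exact Real.Gamma_add_one (by positivity)
  have hPval' : ∀ k : ℕ, ∫ s in Set.Ioc (0:ℝ) t, P (k+1) s
      = Real.Gamma (((k+1:ℕ):ℝ)*α) * Real.Gamma (1-α) / Real.Gamma ((k:ℝ)*α + 1)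
        * (t^α)^k := by
    intro k
    rw [hPval (k+1) k.succ_pos,
      show (((k+1:ℕ)):ℝ)*α + (1-α) = (k:ℝ)*α + 1 by push_cast; ring,
      show ((k:ℝ)*α + 1) - 1 = (k:ℝ)*α by ring, ← ML.rpow_pow ht.le α k]
  have hKval' : ∀ k : ℕ, K (k+1) * Real.Gamma (((k+1:ℕ):ℝ)*α) = c * m^(k+1) := by
    intro k
    have hjα : (0:ℝ) < (((k+1:ℕ)):ℝ)*α := by positivity
    have hΓp : (0:ℝ) < Real.Gamma ((((k+1:ℕ)):ℝ)*α) := Real.Gamma_pos_of_pos hjα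
    rw [hK]; simp only []
    rw [hΓrec (k+1) k.succ_pos]
    field_simp
  have hSsucc : ∀ k : ℕ, (∫ s in Set.Ioc (0:ℝ) t, K (k+1) * P (k+1) s)
      = c * m^(k+1) * Real.Gamma (1-α) * ((t^α)^k / Real.Gamma ((k:ℝ)*α + 1)) := by
    intro k
    rw [MeasureTheory.integral_const_mul, hPval' k]
    calc K (k+1) * (Real.Gamma (((k+1:ℕ):ℝ)*α) * Real.Gamma (1-α)
            / Real.Gamma ((k:ℝ)*α + 1) * (t^α)^k)
        = (K (k+1) * Real.Gamma (((k+1:ℕ):ℝ)*α)) * Real.Gamma (1-α)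
            / Real.Gamma ((k:ℝ)*α + 1) * (t^α)^k := by ring
      _ = c * m^(k+1) * Real.Gamma (1-α) * ((t^α)^k / Real.Gamma ((k:ℝ)*α + 1)) := by
          rw [hKval' k]; ring
  have hNval : ∀ j : ℕ, (∫ s in Set.Ioc (0:ℝ) t, ‖K j * P j s‖)
      = |K j| * ∫ s in Set.Ioc (0:ℝ) t, P j s := by
    intro j
    rw [← MeasureTheory.integral_const_mul]
    apply MeasureTheory.integral_congr_ae
    filter_upwards [haemem] with s hs
    have h1 : 0 ≤ P j s := by
      rw [hP]; simp only []
      exact mul_nonneg (Real.rpow_nonneg hs.1.le _)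
        (Real.rpow_nonneg (by linarith [hs.2]) _)
    rw [norm_mul, Real.norm_eq_abs, Real.norm_eq_abs, abs_of_nonneg h1]
  have hNsum : Summable (fun j : ℕ => ∫ s in Set.Ioc (0:ℝ) t, ‖K j * P j s‖) := by
    rw [← summable_nat_add_iff 1]
    have hterm : ∀ k : ℕ, ∫ s in Set.Ioc (0:ℝ) t, ‖K (k+1) * P (k+1) s‖
        = (|c| * |m| * Real.Gamma (1-α)) * ((|m| * t^α)^k / Real.Gamma ((k:ℝ)*α+1)) := by
      intro k
      have hjα : (0:ℝ) < (((k+1:ℕ)):ℝ)*α := by positivity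
      have hΓp : (0:ℝ) < Real.Gamma ((((k+1:ℕ)):ℝ)*α) := Real.Gamma_pos_of_pos hjα
      have habs : |K (k+1)| * Real.Gamma (((k+1:ℕ):ℝ)*α) = |c| * |m|^(k+1) := by
        rw [← abs_of_pos hΓp, ← abs_mul, hKval' k, abs_mul, abs_pow]
      rw [hNval (k+1), hPval' k]
      calc |K (k+1)| * (Real.Gamma (((k+1:ℕ):ℝ)*α) * Real.Gamma (1-α)
              / Real.Gamma ((k:ℝ)*α + 1) * (t^α)^k)
          = (|K (k+1)| * Real.Gamma (((k+1:ℕ):ℝ)*α)) * Real.Gamma (1-α)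
              / Real.Gamma ((k:ℝ)*α + 1) * (t^α)^k := by ring
        _ = (|c| * |m| * Real.Gamma (1-α)) * ((|m| * t^α)^k / Real.Gamma ((k:ℝ)*α+1)) := by
            rw [habs, mul_pow, pow_succ]; ring
    exact Summable.congr
      ((ML.summable_aux hα0 (r := |m| * t^α) (by positivity)).mul_left
        (|c| * |m| * Real.Gamma (1-α))) (fun k => (hterm k).symm)
  have hSsum : Summable (fun j : ℕ => ∫ s in Set.Ioc (0:ℝ) t, K j * P j s) :=
    Summable.of_norm_bounded hNsum
      (fun j => MeasureTheory.norm_integral_le_integral_norm _)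
  have hswap : ∑' j : ℕ, (∫ s in Set.Ioc (0:ℝ) t, K j * P j s)
      = ∫ s in Set.Ioc (0:ℝ) t, (∑' j : ℕ, K j * P j s) :=
    MeasureTheory.integral_tsum_of_summable_integral_norm hGint hNsum
  have hΓq : Real.Gamma (1-α) ≠ 0 := (Real.Gamma_pos_of_pos hq).ne'
  calc (1 / Real.Gamma (1 - α)) * ∫ s in (0:ℝ)..t, deriv y s / (t - s) ^ α
      = (1 / Real.Gamma (1 - α)) * ∫ s in Set.Ioc (0:ℝ) t, deriv y s / (t - s) ^ α := by
        rw [intervalIntegral.integral_of_le ht.le]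
    _ = (1 / Real.Gamma (1 - α)) * ∫ s in Set.Ioc (0:ℝ) t, (∑' j : ℕ, K j * P j s) := by
        congr 1
        apply MeasureTheory.integral_congr_ae
        filter_upwards [haemem] with s hs
        exact hptwise s hs
    _ = (1 / Real.Gamma (1 - α)) * ∑' j : ℕ, ∫ s in Set.Ioc (0:ℝ) t, K j * P j s := by
        rw [hswap]
    _ = (1 / Real.Gamma (1 - α)) * ((∫ s in Set.Ioc (0:ℝ) t, K 0 * P 0 s)
          + ∑' k : ℕ, ∫ s in Set.Ioc (0:ℝ) t, K (k+1) * P (k+1) s) := by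
        rw [Summable.tsum_eq_zero_add hSsum]
    _ = (1 / Real.Gamma (1 - α)) * (c * m * Real.Gamma (1-α) * mittagLeffler α (m * t^α)) := by
        have h0 : (∫ s in Set.Ioc (0:ℝ) t, K 0 * P 0 s) = 0 := by
          have hK0 : K 0 = 0 := by rw [hK]; simp
          simp [hK0]
        rw [h0, zero_add]
        congr 1
        calc ∑' k : ℕ, ∫ s in Set.Ioc (0:ℝ) t, K (k+1) * P (k+1) s
            = ∑' k : ℕ, (c * m * Real.Gamma (1-α))
                * ((m * t^α)^k / Real.Gamma ((k:ℝ)*α+1)) := by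
              apply tsum_congr; intro k
              rw [hSsucc k, mul_pow, pow_succ]; ring
          _ = (c * m * Real.Gamma (1-α))
                * ∑' k : ℕ, (m * t^α)^k / Real.Gamma ((k:ℝ)*α+1) := tsum_mul_left
          _ = c * m * Real.Gamma (1-α) * mittagLeffler α (m * t^α) := rfl
    _ = m * y t + lam := by
        rw [hy t, hc]
        field_simp
        ring
end
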